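/- The map φ proceeds from right to left through the initial Lyndon word, successively turning the unmatched 1's into 0's: if w is a Lyndon binary word of length n with strictly more 1's than 0's and unmatched positions p_1 < … < p_m, then for every 1 ≤ t ≤ m such that w_{t−1} still has strictly more 1's than 0's, φ(necklace of w_{t−1}) = necklace of w_t. -/

import Mathlib

/-!
Common definitions: binary words of length `n`, rotations, necklaces (the quotient
poset `Bₙ/Cₙ`), the cyclic matching procedure, Lyndon words, the map `φ`,
crossing pairs, and the words `w_t`.

Throughout, a binary word of length `n` is a function `Fin n → Bool`, where `true`
encodes the letter `1` and `false` the letter `0`.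
-/

/-- A binary word of length `n`: `true` encodes the letter `1`, `false` the letter `0`. -/
abbrev Word (n : ℕ) := Fin n → Bool

variable {n : ℕ} [NeZero n]

/-- The rotation `σ_i`, shifting the letters of `w` cyclically by `i` positions (so the
letter at position `j` of `w` appears at position `j + i` of `rot i w`). -/
def rot (i : Fin n) (w : Word n) : Word n := fun j => w (j - i)

lemma rot_rot (i j : Fin n) (w : Word n) : rot i (rot j w) = rot (j + i) w := by
  funext k
  simp [rot, sub_sub, add_comm]

/-- Two words are equivalent when one is a cyclic rotation of the other. -/
def rotSetoid (n : ℕ) [NeZero n] : Setoid (Word n) where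
  r w w' := ∃ i : Fin n, rot i w = w'
  iseqv := by
    refine ⟨fun w => ⟨0, ?_⟩, ?_, ?_⟩
    · funext j; simp [rot]
    · rintro w w' ⟨i, rfl⟩
      refine ⟨-i, ?_⟩
      rw [rot_rot]
      funext j; simp [rot]
    · rintro w w' w'' ⟨i, rfl⟩ ⟨j, rfl⟩
      exact ⟨i + j, (rot_rot j i w).symm⟩

/-- A necklace: an equivalence class of binary words under cyclic rotation. -/
abbrev Necklace (n : ℕ) [NeZero n] := Quotient (rotSetoid n)

/-- The necklace of a word. -/
def nec (w : Word n) : Necklace n := Quotient.mk (rotSetoid n) w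

/-- The number of `1`s in a word. -/
def wt (w : Word n) : ℕ := (Finset.univ.filter fun i => w i = true).card

/-- The number of `0`s in a word. -/
def zeros (w : Word n) : ℕ := (Finset.univ.filter fun i => w i = false).card

/-- The rank of a necklace: the number of `1`s in any representative. -/
noncomputable def rank (u : Necklace n) : ℕ := wt (Quotient.out u)

/-- The set of positions belonging to some pair of `M`. -/
def matchedPos (M : Finset (Fin n × Fin n)) : Finset (Fin n) :=
  M.image Prod.fst ∪ M.image Prod.snd

/-- `j` is the first position outside `S` encountered strictly after `i` in the cyclic
order `i+1, i+2, …` (indices mod `n`). -/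
def FirstAfter (S : Finset (Fin n)) (i j : Fin n) : Prop :=
  j ∉ S ∧ j ≠ i ∧ ∀ k : Fin n, k ∉ S → k ≠ i → (j - i).val ≤ (k - i).val

/-- One step of the cyclic matching procedure on the word `w`: choose an as-yet-unmatched
position `i` carrying the letter `0` such that the first as-yet-unmatched position `j`
after `i` in cyclic order carries the letter `1`, and declare `{i, j}` a matched pair
(recorded as the ordered pair `(i, j)`, the `0`-position first). -/
inductive MatchStep (w : Word n) :
    Finset (Fin n × Fin n) → Finset (Fin n × Fin n) → Prop
  | step {M : Finset (Fin n × Fin n)} {i j : Fin n}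
      (hi : i ∉ matchedPos M) (hw : w i = false)
      (hj : FirstAfter (matchedPos M) i j) (hj1 : w j = true) :
      MatchStep w M (insert (i, j) M)

/-- A maximal execution of the cyclic matching procedure on `w`, starting from the empty
matching: `M` is reachable from `∅` by matching steps and no further step is possible. -/
def IsMaximalMatching (w : Word n) (M : Finset (Fin n × Fin n)) : Prop :=
  Relation.ReflTransGen (MatchStep w) ∅ M ∧ ∀ M', ¬ MatchStep w M M'

/-- The cyclic matching of `w`: the set of matched pairs produced by (any) maximal
execution of the cyclic matching procedure. -/
noncomputable def matching (w : Word n) : Finset (Fin n × Fin n) :=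
  letI := Classical.dec (∃ M, IsMaximalMatching w M)
  if h : ∃ M, IsMaximalMatching w M then h.choose else ∅

/-- The unmatched positions of `w`: positions belonging to no matched pair. -/
noncomputable def unmatchedPos (w : Word n) : Finset (Fin n) :=
  Finset.univ \ matchedPos (matching w)

/-- Lexicographic comparison of words with respect to the letter order `1 ≺ 0`
(recall `true` encodes `1` and `false` encodes `0`). -/
def lexLE (w w' : Word n) : Prop :=
  w = w' ∨ ∃ i : Fin n, (∀ j : Fin n, j < i → w j = w' j) ∧ w i = true ∧ w' i = false

/-- A word is Lyndon if it is lexicographically smallest among all of its rotations,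
with respect to the letter order `1 ≺ 0`. -/
def IsLyndon (w : Word n) : Prop := ∀ i : Fin n, lexLE w (rot i w)

/-- The Lyndon rearrangement of `w`: its lexicographically smallest rotation. -/
noncomputable def lyndonOf (w : Word n) : Word n :=
  letI := Classical.dec (∃ i : Fin n, IsLyndon (rot i w))
  if h : ∃ i : Fin n, IsLyndon (rot i w) then rot h.choose w else w

/-- Change the letter at the rightmost unmatched position of `w` to `0`. -/
noncomputable def flipTop (w : Word n) : Word n :=
  if h : (unmatchedPos w).Nonempty then
    Function.update w ((unmatchedPos w).max' h) false
  else w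

/-- The map `φ`: take the Lyndon rearrangement of a representative and change the letter
at its rightmost unmatched position (which carries a `1` on the upper half of ranks)
to `0`. -/
noncomputable def phi (u : Necklace n) : Necklace n :=
  nec (flipTop (lyndonOf (Quotient.out u)))

/-- `x` lies strictly inside the cyclic arc running from `i` (exclusive) to `k`
(exclusive), in the cyclic order of positions. -/
def StrictBtw (i x k : Fin n) : Prop :=
  0 < (x - i).val ∧ (x - i).val < (k - i).val

/-- The pairs `{i, k}` and `{j, l}` cross: exactly one of `j, l` lies strictly inside one
of the two cyclic arcs determined by `i` and `k`. -/
def Crosses (i k j l : Fin n) : Prop := Xor' (StrictBtw i j k) (StrictBtw i l k)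

/-- `wT w t` is the word obtained from `w` by changing the letters at the last `t`
unmatched positions of `w` to `0`; that is, if the unmatched positions of `w` are
`p₁ < … < p_m`, the positions `p_{m-t+1}, …, p_m` are changed to `0`. -/
noncomputable def wT (w : Word n) (t : ℕ) : Word n := fun j =>
  if j ∈ unmatchedPos w ∧ ((unmatchedPos w).filter fun k => j ≤ k).card ≤ t then false
  else w j

/-- The order on necklaces (the poset `Bₙ/Cₙ`): `u ≤ v` iff there are representatives
`w` of `u` and `w'` of `v` such that every position carrying `1` in `w` also carries `1`
in `w'`. -/
def nle (u v : Necklace n) : Prop :=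
  ∃ w w' : Word n, nec w = u ∧ nec w' = v ∧ ∀ i, w i = true → w' i = true

/-- The strict order on necklaces. -/
def nlt (u v : Necklace n) : Prop := nle u v ∧ u ≠ v

/-- `v` covers `u` in `Bₙ/Cₙ`: `u < v` and there is no `z` with `u < z < v`. -/
def ncovBy (u v : Necklace n) : Prop := nlt u v ∧ ∀ z, nlt u z → ¬ nlt z v

/-- A chain top: a necklace `v` in the upper half of ranks (`2·rank v ≥ n`) which is not
the image under `φ` of any necklace in the strict upper half of ranks. -/
def IsChainTop (v : Necklace n) : Prop :=
  n ≤ 2 * rank v ∧ ∀ u : Necklace n, n < 2 * rank u → phi u ≠ v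

/-- The `φ`-string below the chain top `v`: the necklaces of the words `w_t`,
`0 ≤ t ≤ m`, where `w` is the Lyndon representative of `v` and `m = 2·rank v − n`. -/
noncomputable def chainOf (v : Necklace n) : Set (Necklace n) :=
  { u | ∃ t ≤ 2 * rank v - n, u = nec (wT (lyndonOf (Quotient.out v)) t) }

set_option linter.unusedSectionVars false
set_option linter.unusedTactic false

section AuxProof

variable {n : ℕ} [NeZero n]

/-! ### generic Fin helpers -/

lemma sub_val' (a b : Fin n) : (a - b).val = (n - b.val + a.val) % n := by
  rw [Fin.sub_def]

lemma rot_zero (w : Word n) : rot 0 w = w := by funext j; simp [rot]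

lemma rot_apply_add (i : Fin n) (w : Word n) (j : Fin n) : rot i w (j + i) = w j := by
  simp [rot]

/-! ### lexLE basics -/

/-- numeric key: smaller key ↔ lex-smaller (1 ≺ 0). -/
def wkey (w : Word n) : ℕ := ∑ i : Fin n, (if w i then 0 else 2 ^ (n - 1 - i.val))

lemma lexLE_of_wkey_le {u u' : Word n} (h : wkey u ≤ wkey u') : lexLE u u' := by
  by_cases he : u = u'
  · exact Or.inl he
  · have hD : ({i | u i ≠ u' i} : Finset (Fin n)).Nonempty := by
      by_contra hc
      apply he
      funext i
      by_contra hne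
      exact hc ⟨i, by simpa using hne⟩
    set c := ({i | u i ≠ u' i} : Finset (Fin n)).min' hD with hc
    have hcmem : u c ≠ u' c := by
      have := Finset.min'_mem ({i | u i ≠ u' i} : Finset (Fin n)) hD
      simpa using this
    have hlt : ∀ j : Fin n, j < c → u j = u' j := by
      intro j hj
      by_contra hne
      exact absurd (Finset.min'_le _ j (by simpa using hne)) (not_le.mpr hj)
    rcases Bool.eq_false_or_eq_true (u c) with h1 | h0
    · right
      refine ⟨c, hlt, h1, ?_⟩
      cases hh : u' c
      · rfl
      · exact absurd (h1.trans hh.symm) hcmem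
    · -- u c = false, u' c = true : contradiction with key inequality
      exfalso
      have h0' : u' c = true := by
        cases hh : u' c
        · exact absurd (h0.trans hh.symm) hcmem
        · rfl
      -- show wkey u' < wkey u
      have key : wkey u' < wkey u := by
        have hsplit : ∀ v : Word n, wkey v =
            (∑ i ∈ Finset.univ.filter (· < c), (if v i then 0 else 2 ^ (n - 1 - i.val)))
            + ((if v c then 0 else 2 ^ (n - 1 - c.val))
             + ∑ i ∈ Finset.univ.filter (c < ·), (if v i then 0 else 2 ^ (n - 1 - i.val))) := by
          intro v
          rw [wkey]
          rw [← Finset.sum_filter_add_sum_filter_not Finset.univ (· < c)]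
          congr 1
          have : (Finset.univ.filter (fun i => ¬ (i < c)) : Finset (Fin n))
              = insert c (Finset.univ.filter (c < ·)) := by
            ext x
            simp only [Finset.mem_filter, Finset.mem_univ, true_and, Finset.mem_insert, not_lt]
            constructor
            · intro hx
              rcases eq_or_lt_of_le hx with h | h
              · exact Or.inl h.symm
              · exact Or.inr h
            · rintro (rfl | hx)
              · exact le_refl _
              · exact le_of_lt hx
          rw [this, Finset.sum_insert (by simp)]
        rw [hsplit u, hsplit u']
        have heq : (∑ i ∈ Finset.univ.filter (· < c), (if u i then 0 else 2 ^ (n - 1 - i.val)))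
            = ∑ i ∈ Finset.univ.filter (· < c), (if u' i then 0 else 2 ^ (n - 1 - i.val)) := by
          apply Finset.sum_congr rfl
          intro i hi
          rw [hlt i (by simpa using hi)]
        rw [heq]
        apply Nat.add_lt_add_left
        rw [h0, h0']
        simp only [if_true, if_false, zero_add]
        calc ∑ i ∈ Finset.univ.filter (c < ·), (if u' i then 0 else 2 ^ (n - 1 - i.val))
            ≤ ∑ i ∈ Finset.univ.filter (c < ·), 2 ^ (n - 1 - i.val) := by
              apply Finset.sum_le_sum; intro i _; split <;> simp
          _ = ∑ k ∈ (Finset.univ.filter (c < ·)).image (fun i : Fin n => n - 1 - i.val),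
                2 ^ k := by
              rw [Finset.sum_image]
              intro x hx y hy hxy
              have hx' : c < x := by simpa using hx
              have hy' : c < y := by simpa using hy
              have : x.val = y.val := by simp only at hxy; omega
              exact Fin.ext this
          _ < 2 ^ (n - 1 - c.val) := by
              apply Nat.geomSum_lt le_rfl
              intro k hk
              simp only [Finset.mem_image, Finset.mem_filter, Finset.mem_univ, true_and] at hk
              obtain ⟨i, hci, rfl⟩ := hk
              have : c.val < i.val := hci
              have : i.val < n := i.isLt
              omega
          _ ≤ 2 ^ (n - 1 - c.val) + ∑ i ∈ Finset.univ.filter (c < ·),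
                (if u i then 0 else 2 ^ (n - 1 - i.val)) := Nat.le_add_right _ _
      omega

/-- a first-difference certificate contradicts `lexLE` the other way. -/
lemma lexLE_absurd {x y : Word n} (h : lexLE x y) (c : Fin n)
    (hpre : ∀ j : Fin n, j < c → x j = y j) (hy : y c = true) (hx : x c = false) : False := by
  rcases h with rfl | ⟨i, hpre', hxi, hyi⟩
  · simp [hy] at hx
  · rcases lt_trichotomy i c with h | rfl | h
    · have := hpre i h
      rw [hxi, hyi] at this
      simp at this
    · rw [hxi] at hx; simp at hx
    · have := hpre' c h
      rw [hx, hy] at this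
      simp at this

lemma exists_lyndon_rot (w : Word n) : ∃ i : Fin n, IsLyndon (rot i w) := by
  obtain ⟨i₀, -, hmin⟩ := Finset.exists_min_image Finset.univ (fun i => wkey (rot i w))
    ⟨0, Finset.mem_univ 0⟩
  refine ⟨i₀, fun i => ?_⟩
  rw [rot_rot]
  exact lexLE_of_wkey_le (hmin _ (Finset.mem_univ _))

lemma lyndon_unique {u u' : Word n} (hu : IsLyndon u) (hu' : IsLyndon u')
    (i : Fin n) (hi : rot i u = u') : u = u' := by
  by_contra hne
  have h1 : lexLE u u' := hi ▸ hu i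
  have h2 : lexLE u' u := by
    have := hu' (-i)
    rw [← hi, rot_rot] at this
    simpa [add_neg_cancel, rot_zero, hi] using this
  rcases h1 with rfl | ⟨c, hpre, hc1, hc2⟩
  · exact hne rfl
  · exact lexLE_absurd h2 c (fun j hj => (hpre j hj).symm) hc1 hc2

lemma lyndonOf_eq_of_isLyndon {u v : Word n} (hv : IsLyndon v)
    (h : (rotSetoid n).r u v) : lyndonOf u = v := by
  rw [lyndonOf]
  have hex : ∃ i : Fin n, IsLyndon (rot i u) := exists_lyndon_rot u
  rw [dif_pos hex]
  obtain ⟨e, he⟩ := h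
  have hL : IsLyndon (rot hex.choose u) := hex.choose_spec
  apply lyndon_unique hL hv (e - hex.choose)
  rw [rot_rot, ← he]
  congr 1
  simp

/-- characterisation used downstream: `lyndonOf u` is a Lyndon rotation of `u`. -/
lemma lyndonOf_spec (u : Word n) : ∃ i : Fin n, rot i u = lyndonOf u ∧ IsLyndon (lyndonOf u) := by
  rw [lyndonOf]
  have hex : ∃ i : Fin n, IsLyndon (rot i u) := exists_lyndon_rot u
  rw [dif_pos hex]
  exact ⟨hex.choose, rfl, hex.choose_spec⟩

lemma val_sub_eq (a b : Fin n) :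
    (a - b).val = if b.val ≤ a.val then a.val - b.val else a.val + n - b.val := by
  rw [sub_val']
  have hb := b.isLt
  have ha := a.isLt
  split
  · have h1 : n - b.val + a.val = n + (a.val - b.val) := by omega
    rw [h1, Nat.add_mod_left, Nat.mod_eq_of_lt (by omega)]
  · have h1 : n - b.val + a.val < n := by omega
    rw [Nat.mod_eq_of_lt h1]
    omega

lemma sub_val_eq_zero_iff {a b : Fin n} : (a - b).val = 0 ↔ a = b := by
  constructor
  · intro h
    have : a - b = 0 := Fin.ext (by simpa using h)
    have := sub_eq_zero.mp this
    exact this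
  · rintro rfl; simp

lemma matchedPos_insert (p : Fin n × Fin n) (M : Finset (Fin n × Fin n)) :
    matchedPos (insert p M) = insert p.1 (insert p.2 (matchedPos M)) := by
  ext x
  simp only [matchedPos, Finset.mem_union, Finset.mem_image, Finset.mem_insert]
  aesop

lemma matchedPos_mono {M M' : Finset (Fin n × Fin n)} (h : M ⊆ M') :
    matchedPos M ⊆ matchedPos M' := by
  intro x hx
  simp only [matchedPos, Finset.mem_union, Finset.mem_image] at hx ⊢
  rcases hx with ⟨p, hp, hpx⟩ | ⟨p, hp, hpx⟩
  · exact Or.inl ⟨p, h hp, hpx⟩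
  · exact Or.inr ⟨p, h hp, hpx⟩

lemma MatchStep.subset {w : Word n} {M M' : Finset (Fin n × Fin n)}
    (h : MatchStep w M M') : M ⊆ M' := by
  cases h with
  | step hi hw hj hj1 => exact Finset.subset_insert _ _

lemma MatchStep.card_lt {w : Word n} {M M' : Finset (Fin n × Fin n)}
    (h : MatchStep w M M') : M.card < M'.card := by
  cases h with
  | @step i j hi hw hj hj1 =>
    have hnm : (i, j) ∉ M := by
      intro hmem
      apply hi
      simp only [matchedPos, Finset.mem_union, Finset.mem_image]
      exact Or.inl ⟨(i, j), hmem, rfl⟩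
    rw [Finset.card_insert_of_notMem hnm]
    omega

lemma reflTransGen_subset {w : Word n} {M M' : Finset (Fin n × Fin n)}
    (h : Relation.ReflTransGen (MatchStep w) M M') : M ⊆ M' := by
  induction h with
  | refl => exact Finset.Subset.refl _
  | tail _ hstep ih => exact ih.trans hstep.subset

lemma exists_isMaximalMatching (w : Word n) : ∃ M, IsMaximalMatching w M := by
  classical
  obtain ⟨M, hM, hmax⟩ := Finset.exists_max_image
    ((Finset.univ : Finset (Finset (Fin n × Fin n))).filter
      (fun M => Relation.ReflTransGen (MatchStep w) ∅ M)) Finset.card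
    ⟨∅, Finset.mem_filter.mpr ⟨Finset.mem_univ _, Relation.ReflTransGen.refl⟩⟩
  simp only [Finset.mem_filter, Finset.mem_univ, true_and] at hM
  refine ⟨M, hM, fun M' hstep => ?_⟩
  have hM' : Relation.ReflTransGen (MatchStep w) ∅ M' := hM.tail hstep
  have := hmax M' (by simp [hM'])
  have := hstep.card_lt
  omega

lemma firstAfter_unique {S : Finset (Fin n)} {i j j' : Fin n}
    (h : FirstAfter S i j) (h' : FirstAfter S i j') : j = j' := by
  obtain ⟨hS, hne, hmin⟩ := h
  obtain ⟨hS', hne', hmin'⟩ := h'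
  have h1 := hmin j' hS' hne'
  have h2 := hmin' j hS hne
  have : (j - i).val = (j' - i).val := le_antisymm h1 h2
  have : j - i = j' - i := Fin.ext this
  exact sub_left_injective this

lemma firstAfter_not_two_bases {S : Finset (Fin n)} {i i' j : Fin n}
    (hii' : i ≠ i') (hiS : i ∉ S) (hi'S : i' ∉ S)
    (h : FirstAfter S i j) (h' : FirstAfter S i' j) (hji' : j ≠ i') : False := by
  obtain ⟨hS, hji, hmin⟩ := h
  obtain ⟨-, -, hmin'⟩ := h'
  have h1 : (j - i).val ≤ (i' - i).val := hmin i' hi'S (Ne.symm hii')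
  have h2 : (j - i').val ≤ (i - i').val := hmin' i hiS hii'
  have e1 := val_sub_eq j i
  have e2 := val_sub_eq i' i
  have e3 := val_sub_eq j i'
  have e4 := val_sub_eq i i'
  have hji0 : (j - i).val ≠ 0 := fun hc => hji (sub_val_eq_zero_iff.mp hc)
  have hji'0 : (j - i').val ≠ 0 := fun hc => hji' (sub_val_eq_zero_iff.mp hc)
  have hii'0 : (i' - i).val ≠ 0 := fun hc => hii' (sub_val_eq_zero_iff.mp hc).symm
  have hii'0' : (i - i').val ≠ 0 := fun hc => hii' (sub_val_eq_zero_iff.mp hc)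
  have hj2 : (j - i).val ≠ (i' - i).val := by
    intro hc
    exact hji' (sub_left_injective (Fin.ext hc))
  have hvj := j.isLt; have hvi := i.isLt; have hvi' := i'.isLt
  rcases Nat.lt_or_ge j.val n with _ | _
  · split_ifs at e1 e2 e3 e4 <;> omega
  · omega

lemma maximalMatching_unique {w : Word n} {M M' : Finset (Fin n × Fin n)}
    (h : IsMaximalMatching w M) (h' : IsMaximalMatching w M') : M = M' := by
  have diamond : ∀ a b c, MatchStep w a b → MatchStep w a c →
      ∃ d, Relation.ReflGen (MatchStep w) b d ∧
        Relation.ReflTransGen (MatchStep w) c d := by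
    intro a b c hb hc
    cases hb with
    | @step i j hi hwi hj hj1 =>
      cases hc with
      | @step i' j' hi' hwi' hj' hj'1 =>
        by_cases hii' : i = i'
        · subst hii'
          have : j = j' := firstAfter_unique hj hj'
          subst this
          exact ⟨insert (i, j) a, Relation.ReflGen.refl, Relation.ReflTransGen.refl⟩
        · -- all four positions distinct
          have hji' : j ≠ i' := by
            intro hc; rw [hc] at hj1; rw [hj1] at hwi'; simp at hwi'
          have hj'i : j' ≠ i := by
            intro hc; rw [hc] at hj'1; rw [hj'1] at hwi; simp at hwi
          have hjj' : j ≠ j' := by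
            intro hc
            subst hc
            exact firstAfter_not_two_bases hii' hi hi' hj hj' hji'
          have hij : i ≠ j := fun hc => by rw [hc] at hwi; rw [hj1] at hwi; simp at hwi
          have hij' : i' ≠ j' := fun hc => by rw [hc] at hwi'; rw [hj'1] at hwi'; simp at hwi'
          refine ⟨insert (i', j') (insert (i, j) a), ?_, ?_⟩
          · apply Relation.ReflGen.single
            have hS : matchedPos (insert (i, j) a) = insert i (insert j (matchedPos a)) :=
              matchedPos_insert _ _
            have hi'2 : i' ∉ matchedPos (insert (i, j) a) := by
              rw [hS]; simp only [Finset.mem_insert]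
              push_neg
              exact ⟨Ne.symm hii', Ne.symm hji', hi'⟩
            have hfa : FirstAfter (matchedPos (insert (i, j) a)) i' j' := by
              obtain ⟨hS', hne', hmin'⟩ := hj'
              refine ⟨?_, hne', ?_⟩
              · rw [hS]; simp only [Finset.mem_insert]
                push_neg
                exact ⟨hj'i, Ne.symm hjj', hS'⟩
              · intro k hk hki
                rw [hS] at hk
                simp only [Finset.mem_insert] at hk
                push_neg at hk
                exact hmin' k hk.2.2 hki
            exact MatchStep.step hi'2 hwi' hfa hj'1
          · apply Relation.ReflTransGen.single
            have hS : matchedPos (insert (i', j') a) = insert i' (insert j' (matchedPos a)) :=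
              matchedPos_insert _ _
            have hi2 : i ∉ matchedPos (insert (i', j') a) := by
              rw [hS]; simp only [Finset.mem_insert]
              push_neg
              exact ⟨hii', Ne.symm hj'i, hi⟩
            have hfa : FirstAfter (matchedPos (insert (i', j') a)) i j := by
              obtain ⟨hS', hne', hmin'⟩ := hj
              refine ⟨?_, hne', ?_⟩
              · rw [hS]; simp only [Finset.mem_insert]
                push_neg
                exact ⟨hji', hjj', hS'⟩
              · intro k hk hki
                rw [hS] at hk
                simp only [Finset.mem_insert] at hk
                push_neg at hk
                exact hmin' k hk.2.2 hki
            have : insert (i, j) (insert (i', j') a) = insert (i', j') (insert (i, j) a) :=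
              Finset.insert_comm _ _ _
            rw [← this]
            exact MatchStep.step hi2 hwi hfa hj1
  have hjoin := Relation.church_rosser diamond h.1 h'.1
  obtain ⟨d, hd1, hd2⟩ := hjoin
  have he1 : M = d := by
    rcases hd1.cases_head with h1 | ⟨c, hc, -⟩
    · exact h1
    · exact absurd hc (h.2 c)
  have he2 : M' = d := by
    rcases hd2.cases_head with h1 | ⟨c, hc, -⟩
    · exact h1
    · exact absurd hc (h'.2 c)
  rw [he1, he2]

lemma matching_isMaximal (w : Word n) : IsMaximalMatching w (matching w) := by
  rw [matching]
  have h := exists_isMaximalMatching w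
  rw [dif_pos h]
  exact h.choose_spec

lemma matching_eq {w : Word n} {M : Finset (Fin n × Fin n)}
    (h : IsMaximalMatching w M) : matching w = M :=
  maximalMatching_unique (matching_isMaximal w) h

lemma val_sub_sub (x u i : Fin n) (h : (u - i).val ≤ (x - i).val) :
    (x - u).val = (x - i).val - (u - i).val := by
  have e1 := val_sub_eq x i
  have e2 := val_sub_eq u i
  have e3 := val_sub_eq x u
  have h1 := x.isLt
  have h2 := u.isLt
  have h3 := i.isLt
  split_ifs at e1 e2 e3 <;> omega

def GoodM (w : Word n) (M : Finset (Fin n × Fin n)) : Prop :=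
  (∀ p ∈ M, w p.1 = false ∧ w p.2 = true) ∧
  (∀ p ∈ M, ∀ q ∈ M, p.1 = q.1 → p = q) ∧
  (∀ p ∈ M, ∀ q ∈ M, p.2 = q.2 → p = q)

lemma goodM_of_chain {w : Word n} {M : Finset (Fin n × Fin n)}
    (h : Relation.ReflTransGen (MatchStep w) ∅ M) : GoodM w M := by
  induction h with
  | refl => exact ⟨by simp, by simp, by simp⟩
  | tail hchain hstep ih =>
    obtain ⟨hlet, hfst, hsnd⟩ := ih
    cases hstep with
    | @step i j hi hw hj hj1 =>
      have hinotmem : ∀ q ∈ _root_.matching w, True := fun _ _ => trivial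
      refine ⟨?_, ?_, ?_⟩
      · intro p hp
        rcases Finset.mem_insert.mp hp with rfl | hp
        · exact ⟨hw, hj1⟩
        · exact hlet p hp
      · intro p hp q hq he
        rcases Finset.mem_insert.mp hp with rfl | hp <;>
          rcases Finset.mem_insert.mp hq with rfl | hq
        · rfl
        · exfalso; apply hi
          simp only [matchedPos, Finset.mem_union, Finset.mem_image]
          exact Or.inl ⟨q, hq, he.symm⟩
        · exfalso; apply hi
          simp only [matchedPos, Finset.mem_union, Finset.mem_image]
          exact Or.inl ⟨p, hp, he⟩
        · exact hfst p hp q hq he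
      · intro p hp q hq he
        rcases Finset.mem_insert.mp hp with rfl | hp <;>
          rcases Finset.mem_insert.mp hq with rfl | hq
        · rfl
        · exfalso; apply hj.1
          simp only [matchedPos, Finset.mem_union, Finset.mem_image]
          exact Or.inr ⟨q, hq, he.symm⟩
        · exfalso; apply hj.1
          simp only [matchedPos, Finset.mem_union, Finset.mem_image]
          exact Or.inr ⟨p, hp, he⟩
        · exact hsnd p hp q hq he

lemma goodM_matching (w : Word n) : GoodM w (matching w) :=
  goodM_of_chain (matching_isMaximal w).1

lemma exists_unmatched_true {w : Word n} (hmaj : zeros w < wt w)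
    {M : Finset (Fin n × Fin n)} (hG : GoodM w M) :
    ∃ k, k ∉ matchedPos M ∧ w k = true := by
  by_contra hc
  push_neg at hc
  -- every true position is in the snd-image
  have h1 : (Finset.univ.filter fun i => w i = true) ⊆ M.image Prod.snd := by
    intro k hk
    have hkt : w k = true := (Finset.mem_filter.mp hk).2
    by_cases hmem : k ∈ matchedPos M
    · rcases Finset.mem_union.mp hmem with h | h
      · obtain ⟨p, hp, rfl⟩ := Finset.mem_image.mp h
        have := (hG.1 p hp).1
        rw [this] at hkt; simp at hkt
      · exact h
    · exact absurd hkt (hc k hmem)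
  have h2 : M.image Prod.fst ⊆ (Finset.univ.filter fun i => w i = false) := by
    intro k hk
    obtain ⟨p, hp, rfl⟩ := Finset.mem_image.mp hk
    simp only [Finset.mem_filter, Finset.mem_univ, true_and]
    exact (hG.1 p hp).1
  have c1 : wt w ≤ (M.image Prod.snd).card := by
    rw [wt]; exact Finset.card_le_card h1
  have c2 : (M.image Prod.snd).card ≤ M.card := Finset.card_image_le
  have c3 : M.card = (M.image Prod.fst).card := by
    rw [Finset.card_image_of_injOn]
    intro p hp q hq he
    exact hG.2.1 p hp q hq he
  have c4 : (M.image Prod.fst).card ≤ zeros w := by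
    rw [zeros]; exact Finset.card_le_card h2
  omega

lemma unmatched_true {w : Word n} (hmaj : zeros w < wt w) :
    ∀ k ∈ unmatchedPos w, w k = true := by
  intro k hk
  rw [unmatchedPos, Finset.mem_sdiff] at hk
  by_contra hfalse
  have hkf : w k = false := by
    cases hw : w k
    · rfl
    · exact absurd hw hfalse
  set M := _root_.matching w with hM
  have hG : GoodM w M := goodM_matching w
  obtain ⟨x, hxm, hxt⟩ := exists_unmatched_true hmaj hG
  -- the set of (unmatched 0, unmatched 1) pairs
  set F := (Finset.univ ×ˢ Finset.univ : Finset (Fin n × Fin n)).filter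
    (fun p => p.1 ∉ matchedPos M ∧ w p.1 = false ∧ p.2 ∉ matchedPos M ∧ w p.2 = true)
    with hF
  have hFne : F.Nonempty := ⟨(k, x), by
    simp only [hF, Finset.mem_filter, Finset.mem_product, Finset.mem_univ, true_and, and_true]
    exact ⟨hk.2, hkf, hxm, hxt⟩⟩
  obtain ⟨⟨i₀, x₀⟩, hmem, hmin⟩ := Finset.exists_min_image F (fun p => (p.2 - p.1).val) hFne
  simp only [hF, Finset.mem_filter, Finset.mem_product, Finset.mem_univ, true_and, and_true] at hmem
  obtain ⟨hi₀m, hi₀f, hx₀m, hx₀t⟩ := hmem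
  have hne : x₀ ≠ i₀ := by
    intro hc2; rw [hc2] at hx₀t; rw [hi₀f] at hx₀t; simp at hx₀t
  have hfa : FirstAfter (matchedPos M) i₀ x₀ := by
    refine ⟨hx₀m, hne, ?_⟩
    intro u hu hui
    by_contra hlt
    push_neg at hlt
    have hu1 : (u - i₀).val ≠ 0 := fun hc2 => hui (sub_val_eq_zero_iff.mp hc2)
    cases hwu : w u
    · -- u is an unmatched 0 : pair (u, x₀) is smaller
      have hmem2 : (u, x₀) ∈ F := by
        simp only [hF, Finset.mem_filter, Finset.mem_product, Finset.mem_univ, true_and, and_true]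
        exact ⟨hu, hwu, hx₀m, hx₀t⟩
      have := hmin (u, x₀) hmem2
      simp only at this
      have heq := val_sub_sub x₀ u i₀ (le_of_lt hlt)
      omega
    · -- u is an unmatched 1 : pair (i₀, u) is smaller
      have hmem2 : (i₀, u) ∈ F := by
        simp only [hF, Finset.mem_filter, Finset.mem_product, Finset.mem_univ, true_and, and_true]
        exact ⟨hi₀m, hi₀f, hu, hwu⟩
      have := hmin (i₀, u) hmem2
      simp only at this
      omega
  exact (matching_isMaximal w).2 _ (MatchStep.step hi₀m hi₀f hfa hx₀t)

lemma matchedPos_matching_eq {w : Word n} :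
    matchedPos (matching w) = Finset.univ \ unmatchedPos w := by
  ext x
  simp [unmatchedPos]

lemma unmatchedPos_card {w : Word n} (hmaj : zeros w < wt w) :
    (unmatchedPos w).card = wt w - zeros w := by
  set M := _root_.matching w with hM
  have hG : GoodM w M := goodM_matching w
  -- every 0 is matched
  have h0 : (Finset.univ.filter fun i => w i = false) ⊆ M.image Prod.fst := by
    intro k hk
    have hkf : w k = false := (Finset.mem_filter.mp hk).2
    by_cases hmem : k ∈ matchedPos M
    · rcases Finset.mem_union.mp hmem with h | h
      · exact h
      · obtain ⟨p, hp, rfl⟩ := Finset.mem_image.mp h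
        have := (hG.1 p hp).2
        rw [this] at hkf; simp at hkf
    · exfalso
      have : w k = true := unmatched_true hmaj k (by
        rw [unmatchedPos, Finset.mem_sdiff]; exact ⟨Finset.mem_univ _, hmem⟩)
      rw [this] at hkf; simp at hkf
  have h0' : M.image Prod.fst ⊆ (Finset.univ.filter fun i => w i = false) := by
    intro k hk
    obtain ⟨p, hp, rfl⟩ := Finset.mem_image.mp hk
    simp only [Finset.mem_filter, Finset.mem_univ, true_and]
    exact (hG.1 p hp).1
  have hfst : M.image Prod.fst = Finset.univ.filter fun i => w i = false :=
    le_antisymm h0' h0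
  have h1' : M.image Prod.snd ⊆ (Finset.univ.filter fun i => w i = true) := by
    intro k hk
    obtain ⟨p, hp, rfl⟩ := Finset.mem_image.mp hk
    simp only [Finset.mem_filter, Finset.mem_univ, true_and]
    exact (hG.1 p hp).2
  have cfst : (M.image Prod.fst).card = M.card :=
    Finset.card_image_of_injOn (fun p hp q hq he => hG.2.1 p hp q hq he)
  have csnd : (M.image Prod.snd).card = M.card :=
    Finset.card_image_of_injOn (fun p hp q hq he => hG.2.2 p hp q hq he)
  have hdisj : Disjoint (M.image Prod.fst) (M.image Prod.snd) := by
    rw [Finset.disjoint_left]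
    intro a ha hb
    have h1 := h0' ha
    have h2 := h1' hb
    simp only [Finset.mem_filter] at h1 h2
    rw [h1.2] at h2
    simp at h2
  have hcard : (matchedPos M).card = M.card + M.card := by
    rw [matchedPos, Finset.card_union_of_disjoint hdisj, cfst, csnd]
  have hMzeros : M.card = zeros w := by
    rw [zeros, ← hfst, cfst]
  have hwz : wt w + zeros w = n := by
    rw [wt, zeros]
    rw [← Finset.card_union_of_disjoint (by
      rw [Finset.disjoint_left]
      intro a ha hb
      simp only [Finset.mem_filter] at ha hb
      rw [ha.2] at hb
      simp at hb)]
    have huniv : ((Finset.univ.filter fun i => w i = true) ∪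
        (Finset.univ.filter fun i => w i = false)) = (Finset.univ : Finset (Fin n)) := by
      ext x
      simp only [Finset.mem_union, Finset.mem_filter, Finset.mem_univ, true_and, iff_true]
      cases h : w x
      · exact Or.inr rfl
      · exact Or.inl rfl
    rw [huniv]
    simp
  have : (unmatchedPos w).card = n - (matchedPos M).card := by
    rw [unmatchedPos, Finset.card_sdiff_of_subset (Finset.subset_univ _)]
    simp [hM]
  omega

/-- number of unmatched positions weakly to the right of `j`. -/
noncomputable def topc (w : Word n) (j : Fin n) : ℕ :=
  ((unmatchedPos w).filter fun k => j ≤ k).card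

/-- number of unmatched positions weakly to the left of `j`. -/
noncomputable def botc (w : Word n) (j : Fin n) : ℕ :=
  ((unmatchedPos w).filter fun k => k ≤ j).card

/-- middle unmatched positions (ranks `s+1 … m-s`). -/
noncomputable def midP (w : Word n) (s : ℕ) : Finset (Fin n) :=
  (unmatchedPos w).filter fun k => s < botc w k ∧ s < topc w k

lemma wT_apply (w : Word n) (s : ℕ) (j : Fin n) :
    wT w s j = if j ∈ unmatchedPos w ∧ topc w j ≤ s then false else w j := rfl

lemma topc_pos {w : Word n} {j : Fin n} (hj : j ∈ unmatchedPos w) : 1 ≤ topc w j :=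
  Finset.card_pos.mpr ⟨j, Finset.mem_filter.mpr ⟨hj, le_refl j⟩⟩

lemma botc_pos {w : Word n} {j : Fin n} (hj : j ∈ unmatchedPos w) : 1 ≤ botc w j :=
  Finset.card_pos.mpr ⟨j, Finset.mem_filter.mpr ⟨hj, le_refl j⟩⟩

lemma topc_anti {w : Word n} {a b : Fin n} (h : a ≤ b) : topc w b ≤ topc w a :=
  Finset.card_le_card (fun k hk => by
    simp only [Finset.mem_filter] at hk ⊢
    exact ⟨hk.1, le_trans h hk.2⟩)

lemma botc_mono {w : Word n} {a b : Fin n} (h : a ≤ b) : botc w a ≤ botc w b :=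
  Finset.card_le_card (fun k hk => by
    simp only [Finset.mem_filter] at hk ⊢
    exact ⟨hk.1, le_trans hk.2 h⟩)

lemma topc_strict_anti {w : Word n} {a b : Fin n} (ha : a ∈ unmatchedPos w) (h : a < b) :
    topc w b < topc w a := by
  apply Finset.card_lt_card
  constructor
  · intro k hk
    simp only [Finset.mem_filter] at hk ⊢
    exact ⟨hk.1, le_trans (le_of_lt h) hk.2⟩
  · intro hsub
    have : a ∈ (unmatchedPos w).filter fun k => b ≤ k :=
      hsub (Finset.mem_filter.mpr ⟨ha, le_refl a⟩)
    simp only [Finset.mem_filter] at this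
    exact absurd this.2 (not_le.mpr h)

lemma botc_strict_mono {w : Word n} {b : Fin n} (hb : b ∈ unmatchedPos w) {a : Fin n}
    (h : a < b) : botc w a < botc w b := by
  apply Finset.card_lt_card
  constructor
  · intro k hk
    simp only [Finset.mem_filter] at hk ⊢
    exact ⟨hk.1, le_trans hk.2 (le_of_lt h)⟩
  · intro hsub
    have : b ∈ (unmatchedPos w).filter fun k => k ≤ a :=
      hsub (Finset.mem_filter.mpr ⟨hb, le_refl b⟩)
    simp only [Finset.mem_filter] at this
    exact absurd this.2 (not_le.mpr h)

lemma topc_injOn {w : Word n} {a b : Fin n} (ha : a ∈ unmatchedPos w)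
    (hb : b ∈ unmatchedPos w) (h : topc w a = topc w b) : a = b := by
  rcases lt_trichotomy a b with hl | he | hl
  · exact absurd h (Nat.ne_of_gt (topc_strict_anti ha hl))
  · exact he
  · exact absurd h (Nat.ne_of_lt (topc_strict_anti hb hl))

lemma botc_injOn {w : Word n} {a b : Fin n} (ha : a ∈ unmatchedPos w)
    (hb : b ∈ unmatchedPos w) (h : botc w a = botc w b) : a = b := by
  rcases lt_trichotomy a b with hl | he | hl
  · exact absurd h (Nat.ne_of_lt (botc_strict_mono hb hl))
  · exact he
  · exact absurd h (Nat.ne_of_gt (botc_strict_mono ha hl))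

lemma botc_add_topc {w : Word n} {u : Fin n} (hu : u ∈ unmatchedPos w) :
    botc w u + topc w u = (unmatchedPos w).card + 1 := by
  have hun : ((unmatchedPos w).filter fun k => k ≤ u) ∪
      ((unmatchedPos w).filter fun k => u ≤ k) = unmatchedPos w := by
    ext x
    simp only [Finset.mem_union, Finset.mem_filter]
    constructor
    · rintro (h | h) <;> exact h.1
    · intro hx
      rcases le_total x u with h | h
      · exact Or.inl ⟨hx, h⟩
      · exact Or.inr ⟨hx, h⟩
  have hint : ((unmatchedPos w).filter fun k => k ≤ u) ∩
      ((unmatchedPos w).filter fun k => u ≤ k) = {u} := by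
    ext x
    simp only [Finset.mem_inter, Finset.mem_filter, Finset.mem_singleton]
    constructor
    · rintro ⟨⟨-, h1⟩, -, h2⟩
      exact le_antisymm h1 h2
    · rintro rfl
      exact ⟨⟨hu, le_refl _⟩, hu, le_refl _⟩
  have := Finset.card_union_add_card_inter
    ((unmatchedPos w).filter fun k => k ≤ u) ((unmatchedPos w).filter fun k => u ≤ k)
  rw [hun, hint] at this
  simp only [Finset.card_singleton] at this
  rw [botc, topc]
  omega

lemma image_topc (w : Word n) :
    (unmatchedPos w).image (topc w) = Finset.Icc 1 (unmatchedPos w).card := by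
  apply Finset.eq_of_subset_of_card_le
  · intro v hv
    obtain ⟨u, hu, rfl⟩ := Finset.mem_image.mp hv
    rw [Finset.mem_Icc]
    exact ⟨topc_pos hu, Finset.card_le_card (Finset.filter_subset _ _)⟩
  · rw [Finset.card_image_of_injOn (fun a ha b hb => topc_injOn ha hb)]
    rw [Nat.card_Icc]
    omega

lemma card_topc_le (w : Word n) {s : ℕ} (hs : s ≤ (unmatchedPos w).card) :
    ((unmatchedPos w).filter fun k => topc w k ≤ s).card = s := by
  have hinj : ∀ a ∈ ((unmatchedPos w).filter fun k => topc w k ≤ s),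
      ∀ b ∈ ((unmatchedPos w).filter fun k => topc w k ≤ s),
      topc w a = topc w b → a = b := fun a ha b hb =>
    topc_injOn (Finset.mem_filter.mp ha).1 (Finset.mem_filter.mp hb).1
  rw [← Finset.card_image_of_injOn hinj]
  have : ((unmatchedPos w).filter fun k => topc w k ≤ s).image (topc w)
      = Finset.Icc 1 s := by
    apply Finset.Subset.antisymm
    · intro v hv
      obtain ⟨u, hu, rfl⟩ := Finset.mem_image.mp hv
      rw [Finset.mem_filter] at hu
      rw [Finset.mem_Icc]
      exact ⟨topc_pos hu.1, hu.2⟩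
    · intro v hv
      rw [Finset.mem_Icc] at hv
      have hv2 : v ∈ (unmatchedPos w).image (topc w) := by
        rw [image_topc, Finset.mem_Icc]
        exact ⟨hv.1, le_trans hv.2 hs⟩
      obtain ⟨u, hu, rfl⟩ := Finset.mem_image.mp hv2
      exact Finset.mem_image.mpr ⟨u, Finset.mem_filter.mpr ⟨hu, hv.2⟩, rfl⟩
  rw [this, Nat.card_Icc]
  omega

/-- zeros and weight after flipping the top `s` unmatched ones. -/
lemma wt_wT {w : Word n} (hmaj : zeros w < wt w) {s : ℕ}
    (hs : s ≤ (unmatchedPos w).card) :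
    wt (wT w s) = wt w - s ∧ zeros (wT w s) = zeros w + s := by
  have hsplit : (Finset.univ.filter fun i => w i = true)
      = (Finset.univ.filter fun i => wT w s i = true)
        ∪ ((unmatchedPos w).filter fun k => topc w k ≤ s) := by
    ext x
    simp only [Finset.mem_union, Finset.mem_filter, Finset.mem_univ, true_and]
    constructor
    · intro hx
      by_cases hc : x ∈ unmatchedPos w ∧ topc w x ≤ s
      · exact Or.inr ⟨hc.1, hc.2⟩
      · left
        rw [wT_apply, if_neg hc]
        exact hx
    · rintro (hx | hx)
      · rw [wT_apply] at hx
        by_cases hc : x ∈ unmatchedPos w ∧ topc w x ≤ s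
        · rw [if_pos hc] at hx; simp at hx
        · rwa [if_neg hc] at hx
      · exact unmatched_true hmaj x hx.1
  have hdisj : Disjoint (Finset.univ.filter fun i => wT w s i = true)
      ((unmatchedPos w).filter fun k => topc w k ≤ s) := by
    rw [Finset.disjoint_left]
    intro a ha hb
    simp only [Finset.mem_filter, Finset.mem_univ, true_and] at ha hb
    rw [wT_apply, if_pos hb] at ha
    simp at ha
  have hcard := card_topc_le w hs
  have h1 : wt w = wt (wT w s) + s := by
    rw [wt, wt, hsplit, Finset.card_union_of_disjoint hdisj, hcard]
  -- zeros: complement counting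
  have htot : ∀ v : Word n, wt v + zeros v = n := by
    intro v
    rw [wt, zeros]
    rw [← Finset.card_union_of_disjoint (by
      rw [Finset.disjoint_left]
      intro a ha hb
      simp only [Finset.mem_filter] at ha hb
      rw [ha.2] at hb
      simp at hb)]
    have huniv : ((Finset.univ.filter fun i => v i = true) ∪
        (Finset.univ.filter fun i => v i = false)) = (Finset.univ : Finset (Fin n)) := by
      ext x
      simp only [Finset.mem_union, Finset.mem_filter, Finset.mem_univ, true_and, iff_true]
      cases h : v x
      · exact Or.inr rfl
      · exact Or.inl rfl
    rw [huniv]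
    simp
  have t1 := htot w
  have t2 := htot (wT w s)
  constructor <;> omega

/-- the two words `wT w s` and `wT w (s+1)` agree away from `midP w s`. -/
lemma wT_succ_agree {w : Word n} {s : ℕ}
    (hs : 2 * s < (unmatchedPos w).card) {x : Fin n} (hx : x ∉ midP w s) :
    wT w s x = wT w (s + 1) x := by
  rw [wT_apply, wT_apply]
  by_cases h1 : x ∈ unmatchedPos w ∧ topc w x ≤ s
  · rw [if_pos h1, if_pos ⟨h1.1, le_trans h1.2 (Nat.le_succ s)⟩]
  · rw [if_neg h1]
    by_cases h2 : x ∈ unmatchedPos w ∧ topc w x ≤ s + 1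
    · exfalso
      obtain ⟨hxu, hxt⟩ := h2
      have ht : topc w x = s + 1 := by
        rcases Nat.lt_or_ge (topc w x) (s + 1) with h | h
        · exact absurd ⟨hxu, by omega⟩ h1
        · omega
      apply hx
      rw [midP, Finset.mem_filter]
      refine ⟨hxu, ?_, by omega⟩
      have := botc_add_topc hxu
      omega
    · rw [if_neg h2]

/-- transfer a matching chain to a word agreeing on the final matched positions. -/
lemma chain_transfer {v v' : Word n} {Mf : Finset (Fin n × Fin n)}
    (hagree : ∀ x ∈ matchedPos Mf, v x = v' x)
    (h : Relation.ReflTransGen (MatchStep v) ∅ Mf) :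
    Relation.ReflTransGen (MatchStep v') ∅ Mf := by
  suffices H : ∀ M, Relation.ReflTransGen (MatchStep v) ∅ M → M ⊆ Mf →
      Relation.ReflTransGen (MatchStep v') ∅ M from H Mf h (Finset.Subset.refl _)
  intro M hM
  induction hM with
  | refl => intro _; exact Relation.ReflTransGen.refl
  | @tail M₁ M₂ hchain hstep ih =>
    intro hsub
    have hsub₁ : M₁ ⊆ Mf := (hstep.subset).trans hsub
    refine (ih hsub₁).tail ?_
    cases hstep with
    | @step i j hi hw hj hj1 =>
      have hiMf : i ∈ matchedPos Mf := by
        apply matchedPos_mono hsub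
        rw [matchedPos_insert]
        simp
      have hjMf : j ∈ matchedPos Mf := by
        apply matchedPos_mono hsub
        rw [matchedPos_insert]
        simp
      exact MatchStep.step hi (by rw [← hagree i hiMf]; exact hw) hj
        (by rw [← hagree j hjMf]; exact hj1)

lemma midP_zero {w : Word n} : midP w 0 = unmatchedPos w := by
  ext x
  simp only [midP, Finset.mem_filter, and_iff_left_iff_imp]
  intro hx
  exact ⟨botc_pos hx, topc_pos hx⟩

lemma wT_zero {w : Word n} : wT w 0 = w := by
  funext j
  rw [wT_apply]
  split
  · next h => exact absurd (topc_pos h.1) (by omega)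
  · rfl

/-- the main inductive construction of chains for `wT w s`. -/
lemma wT_chain {w : Word n} (hmaj : zeros w < wt w) :
    ∀ s : ℕ, 2 * s ≤ (unmatchedPos w).card →
    ∃ M, Relation.ReflTransGen (MatchStep (wT w s)) ∅ M ∧
      matchedPos M = Finset.univ \ midP w s := by
  intro s
  induction s with
  | zero =>
    intro _
    refine ⟨matching w, ?_, ?_⟩
    · rw [wT_zero]
      exact (matching_isMaximal w).1
    · rw [matchedPos_matching_eq, midP_zero]
  | succ s ih =>
    intro hs
    have hs' : 2 * s ≤ (unmatchedPos w).card := by omega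
    have hslt : 2 * s < (unmatchedPos w).card := by omega
    obtain ⟨M, hchain, hM⟩ := ih hs'
    -- midP w s has at least 2 elements
    have hmidcard : 2 ≤ (midP w s).card := by
      have h1 : ((unmatchedPos w).filter fun k => topc w k ≤ s).card = s :=
        card_topc_le w (by omega)
      -- U \ (T ∪ B) = mid, |T| = |B| = s
      have h2 : ((unmatchedPos w).filter fun k => botc w k ≤ s).card = s := by
        -- analogous to card_topc_le via botc (use bijective pairing through topc)
        -- use: botc u ≤ s ↔ topc u ≥ m + 1 - s and count
        have hinj : ∀ a ∈ ((unmatchedPos w).filter fun k => botc w k ≤ s),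
            ∀ b ∈ ((unmatchedPos w).filter fun k => botc w k ≤ s),
            topc w a = topc w b → a = b := fun a ha b hb =>
          topc_injOn (Finset.mem_filter.mp ha).1 (Finset.mem_filter.mp hb).1
        rw [← Finset.card_image_of_injOn hinj]
        have him : ((unmatchedPos w).filter fun k => botc w k ≤ s).image (topc w)
            = Finset.Icc ((unmatchedPos w).card + 1 - s) (unmatchedPos w).card := by
          apply Finset.Subset.antisymm
          · intro v hv
            obtain ⟨u, hu, rfl⟩ := Finset.mem_image.mp hv
            rw [Finset.mem_filter] at hu
            have := botc_add_topc hu.1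
            have hb := botc_pos hu.1
            rw [Finset.mem_Icc]
            constructor
            · omega
            · exact Finset.card_le_card (Finset.filter_subset _ _)
          · intro v hv
            rw [Finset.mem_Icc] at hv
            have hv2 : v ∈ (unmatchedPos w).image (topc w) := by
              rw [image_topc, Finset.mem_Icc]
              omega
            obtain ⟨u, hu, rfl⟩ := Finset.mem_image.mp hv2
            refine Finset.mem_image.mpr ⟨u, Finset.mem_filter.mpr ⟨hu, ?_⟩, rfl⟩
            have := botc_add_topc hu
            omega
        rw [him, Nat.card_Icc]
        omega
      have hsub : midP w s = (unmatchedPos w) \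
          (((unmatchedPos w).filter fun k => topc w k ≤ s) ∪
           ((unmatchedPos w).filter fun k => botc w k ≤ s)) := by
        ext x
        simp only [midP, Finset.mem_filter, Finset.mem_sdiff, Finset.mem_union]
        constructor
        · rintro ⟨hx, hb, ht⟩
          exact ⟨hx, by push_neg; exact ⟨fun _ => by omega, fun _ => by omega⟩⟩
        · rintro ⟨hx, hninon⟩
          push_neg at hninon
          exact ⟨hx, by
            have h1 := hninon.1 hx
            have h2 := hninon.2 hx
            omega⟩
      have hdisj2 : Disjoint ((unmatchedPos w).filter fun k => topc w k ≤ s)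
          ((unmatchedPos w).filter fun k => botc w k ≤ s) := by
        rw [Finset.disjoint_left]
        intro a ha hb
        simp only [Finset.mem_filter] at ha hb
        have := botc_add_topc ha.1
        omega
      have hsubun : (((unmatchedPos w).filter fun k => topc w k ≤ s) ∪
           ((unmatchedPos w).filter fun k => botc w k ≤ s)) ⊆ unmatchedPos w := by
        intro x hx
        rcases Finset.mem_union.mp hx with h | h <;> exact (Finset.mem_filter.mp h).1
      rw [hsub, Finset.card_sdiff_of_subset hsubun, Finset.card_union_of_disjoint hdisj2, h1, h2]
      omega
    have hmidne : (midP w s).Nonempty := Finset.card_pos.mp (by omega)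
    set i := (midP w s).max' hmidne with hidef
    set j := (midP w s).min' hmidne with hjdef
    have himem : i ∈ midP w s := Finset.max'_mem _ _
    have hjmem : j ∈ midP w s := Finset.min'_mem _ _
    have hiu : i ∈ unmatchedPos w := (Finset.mem_filter.mp himem).1
    have hju : j ∈ unmatchedPos w := (Finset.mem_filter.mp hjmem).1
    have hji : j < i := Finset.min'_lt_max'_of_card _ (by omega)
    -- topc i = s + 1
    have htopci : topc w i = s + 1 := by
      have hgt : s < topc w i := (Finset.mem_filter.mp himem).2.2
      have hle : topc w i ≤ s + 1 := by
        have hsub : ((unmatchedPos w).filter fun k => i ≤ k) ⊆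
            insert i ((unmatchedPos w).filter fun k => topc w k ≤ s) := by
          intro u hu
          rw [Finset.mem_filter] at hu
          rcases eq_or_lt_of_le hu.2 with he | hlt
          · exact Finset.mem_insert.mpr (Or.inl he.symm)
          · refine Finset.mem_insert.mpr (Or.inr (Finset.mem_filter.mpr ⟨hu.1, ?_⟩))
            by_contra hc
            push_neg at hc
            have humid : u ∈ midP w s := by
              rw [midP, Finset.mem_filter]
              refine ⟨hu.1, ?_, hc⟩
              calc s < botc w i := (Finset.mem_filter.mp himem).2.1
                _ ≤ botc w u := botc_mono (le_of_lt hlt)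
            exact absurd (Finset.le_max' _ u humid) (not_le.mpr hlt)
        calc topc w i ≤ (insert i ((unmatchedPos w).filter fun k => topc w k ≤ s)).card :=
              Finset.card_le_card hsub
          _ ≤ ((unmatchedPos w).filter fun k => topc w k ≤ s).card + 1 :=
              Finset.card_insert_le _ _
          _ = s + 1 := by rw [card_topc_le w (by omega)]
      omega
    have hbotcj : botc w j = s + 1 := by
      have hgt : s < botc w j := (Finset.mem_filter.mp hjmem).2.1
      have hle : botc w j ≤ s + 1 := by
        have hsub : ((unmatchedPos w).filter fun k => k ≤ j) ⊆
            insert j ((unmatchedPos w).filter fun k => botc w k ≤ s) := by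
          intro u hu
          rw [Finset.mem_filter] at hu
          rcases eq_or_lt_of_le hu.2 with he | hlt
          · exact Finset.mem_insert.mpr (Or.inl he)
          · refine Finset.mem_insert.mpr (Or.inr (Finset.mem_filter.mpr ⟨hu.1, ?_⟩))
            by_contra hc
            push_neg at hc
            have humid : u ∈ midP w s := by
              rw [midP, Finset.mem_filter]
              refine ⟨hu.1, hc, ?_⟩
              calc s < topc w j := (Finset.mem_filter.mp hjmem).2.2
                _ ≤ topc w u := topc_anti (le_of_lt hlt)
            exact absurd (Finset.min'_le _ u humid) (not_le.mpr hlt)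
        calc botc w j ≤ (insert j ((unmatchedPos w).filter fun k => botc w k ≤ s)).card :=
              Finset.card_le_card hsub
          _ ≤ ((unmatchedPos w).filter fun k => botc w k ≤ s).card + 1 :=
              Finset.card_insert_le _ _
          _ = s + 1 := by
            -- reuse computation h2 from above is out of scope; recompute via botc_add_topc trick
            have hinj : ∀ a ∈ ((unmatchedPos w).filter fun k => botc w k ≤ s),
                ∀ b ∈ ((unmatchedPos w).filter fun k => botc w k ≤ s),
                topc w a = topc w b → a = b := fun a ha b hb =>
              topc_injOn (Finset.mem_filter.mp ha).1 (Finset.mem_filter.mp hb).1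
            rw [← Finset.card_image_of_injOn hinj]
            have him : ((unmatchedPos w).filter fun k => botc w k ≤ s).image (topc w)
                = Finset.Icc ((unmatchedPos w).card + 1 - s) (unmatchedPos w).card := by
              apply Finset.Subset.antisymm
              · intro v hv
                obtain ⟨u, hu, rfl⟩ := Finset.mem_image.mp hv
                rw [Finset.mem_filter] at hu
                have := botc_add_topc hu.1
                have hb := botc_pos hu.1
                rw [Finset.mem_Icc]
                constructor
                · omega
                · exact Finset.card_le_card (Finset.filter_subset _ _)
              · intro v hv
                rw [Finset.mem_Icc] at hv
                have hv2 : v ∈ (unmatchedPos w).image (topc w) := by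
                  rw [image_topc, Finset.mem_Icc]
                  omega
                obtain ⟨u, hu, rfl⟩ := Finset.mem_image.mp hv2
                refine Finset.mem_image.mpr ⟨u, Finset.mem_filter.mpr ⟨hu, ?_⟩, rfl⟩
                have := botc_add_topc hu
                omega
            rw [him, Nat.card_Icc]
            omega
      omega
    have htopcj : topc w j = (unmatchedPos w).card - s := by
      have := botc_add_topc hju
      omega
    -- the new matching step
    have hchain' : Relation.ReflTransGen (MatchStep (wT w (s+1))) ∅ M := by
      apply chain_transfer _ hchain
      intro x hx
      apply wT_succ_agree hslt
      rw [hM, Finset.mem_sdiff] at hx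
      exact fun hc => hx.2 hc
    have histep : wT w (s+1) i = false := by
      rw [wT_apply, if_pos ⟨hiu, by omega⟩]
    have hjstep : wT w (s+1) j = true := by
      rw [wT_apply, if_neg (by
        rintro ⟨-, hc⟩
        omega)]
      exact unmatched_true hmaj j hju
    have hinotm : i ∉ matchedPos M := by
      rw [hM, Finset.mem_sdiff]
      simp only [Finset.mem_univ, true_and, not_not]
      exact himem
    have hfa : FirstAfter (matchedPos M) i j := by
      refine ⟨?_, ne_of_lt hji, ?_⟩
      · rw [hM, Finset.mem_sdiff]
        simp only [Finset.mem_univ, true_and, not_not]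
        exact hjmem
      · intro k hk hki
        rw [hM, Finset.mem_sdiff] at hk
        simp only [Finset.mem_univ, true_and, not_not] at hk
        have hkmid : k ∈ midP w s := hk
        have hkle : k ≤ i := Finset.le_max' _ k hkmid
        have hklt : k < i := lt_of_le_of_ne hkle hki
        have hjk : j ≤ k := Finset.min'_le _ k hkmid
        have e1 := val_sub_eq j i
        have e2 := val_sub_eq k i
        have hjival : j.val < i.val := hji
        have hkival : k.val < i.val := hklt
        have hjkval : j.val ≤ k.val := hjk
        rw [if_neg (by omega)] at e1
        rw [if_neg (by omega)] at e2
        omega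
    refine ⟨insert (i, j) M, hchain'.tail (MatchStep.step hinotm histep hfa hjstep), ?_⟩
    rw [matchedPos_insert, hM]
    ext x
    simp only [Finset.mem_insert, Finset.mem_sdiff, Finset.mem_univ, true_and]
    have hmid_succ : x ∈ midP w (s+1) ↔ x ∈ midP w s ∧ x ≠ i ∧ x ≠ j := by
      simp only [midP, Finset.mem_filter]
      constructor
      · rintro ⟨hx, hb, ht⟩
        refine ⟨⟨hx, by omega, by omega⟩, ?_, ?_⟩
        · rintro rfl; omega
        · rintro rfl; omega
      · rintro ⟨⟨hx, hb, ht⟩, hxi, hxj⟩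
        refine ⟨hx, ?_, ?_⟩
        · rcases Nat.lt_or_ge (s+1) (botc w x) with h | h
          · exact h
          · exfalso
            have : botc w x = s + 1 := by omega
            exact hxj (botc_injOn hx hju (by omega))
        · rcases Nat.lt_or_ge (s+1) (topc w x) with h | h
          · exact h
          · exfalso
            have : topc w x = s + 1 := by omega
            exact hxi (topc_injOn hx hiu (by omega))
    rw [hmid_succ]
    constructor
    · rintro (rfl | rfl | hx)
      · tauto
      · tauto
      · tauto
    · intro hx
      by_cases h1 : x = i
      · exact Or.inl h1
      by_cases h2 : x = j
      · exact Or.inr (Or.inl h2)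
      · refine Or.inr (Or.inr ?_)
        intro hmid
        exact hx ⟨hmid, h1, h2⟩

/-- main conclusion : unmatched positions of `wT w s`. -/
lemma unmatchedPos_wT {w : Word n} (hmaj : zeros w < wt w) {s : ℕ}
    (hs : 2 * s ≤ (unmatchedPos w).card) :
    unmatchedPos (wT w s) = midP w s := by
  obtain ⟨M, hchain, hM⟩ := wT_chain hmaj s hs
  have hmax : IsMaximalMatching (wT w s) M := by
    refine ⟨hchain, ?_⟩
    intro M' hstep
    cases hstep with
    | @step i j hi hw hj hj1 =>
      rw [hM, Finset.mem_sdiff] at hi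
      simp only [Finset.mem_univ, true_and, not_not] at hi
      have himid : i ∈ midP w s := hi
      rw [midP, Finset.mem_filter] at himid
      rw [wT_apply, if_neg (by rintro ⟨-, hc⟩; omega)] at hw
      rw [unmatched_true hmaj i himid.1] at hw
      simp at hw
  have := matching_eq hmax
  rw [unmatchedPos, this, hM]
  ext x
  simp only [Finset.mem_sdiff, Finset.mem_univ, true_and, not_not]

/-! ### rotation equivariance of the matching -/

def pmap (c : Fin n) : Fin n × Fin n → Fin n × Fin n := fun p => (p.1 + c, p.2 + c)

lemma mem_image_addc {S : Finset (Fin n)} {c x : Fin n} :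
    x ∈ S.image (· + c) ↔ x - c ∈ S := by
  simp only [Finset.mem_image]
  constructor
  · rintro ⟨y, hy, rfl⟩
    simpa using hy
  · intro h
    exact ⟨x - c, h, by simp⟩

lemma matchedPos_image (M : Finset (Fin n × Fin n)) (c : Fin n) :
    matchedPos (M.image (pmap c)) = (matchedPos M).image (· + c) := by
  ext x
  simp only [matchedPos, Finset.mem_union, Finset.mem_image, pmap]
  constructor
  · rintro (⟨p, ⟨q, hq, rfl⟩, rfl⟩ | ⟨p, ⟨q, hq, rfl⟩, rfl⟩)
    · exact ⟨q.1, Or.inl ⟨q, hq, rfl⟩, rfl⟩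
    · exact ⟨q.2, Or.inr ⟨q, hq, rfl⟩, rfl⟩
  · rintro ⟨y, (⟨q, hq, rfl⟩ | ⟨q, hq, rfl⟩), rfl⟩
    · exact Or.inl ⟨(q.1 + c, q.2 + c), ⟨q, hq, rfl⟩, rfl⟩
    · exact Or.inr ⟨(q.1 + c, q.2 + c), ⟨q, hq, rfl⟩, rfl⟩

lemma firstAfter_image {S : Finset (Fin n)} {i j c : Fin n} (h : FirstAfter S i j) :
    FirstAfter (S.image (· + c)) (i + c) (j + c) := by
  obtain ⟨hS, hne, hmin⟩ := h
  refine ⟨?_, ?_, ?_⟩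
  · rw [mem_image_addc]
    simpa using hS
  · intro hc
    exact hne (by
      have := congrArg (· - c) hc
      simpa using this)
  · intro k hk hki
    rw [mem_image_addc] at hk
    have h1 : (j + c) - (i + c) = j - i := by abel
    have h2 : k - (i + c) = (k - c) - i := by abel
    rw [h1, h2]
    apply hmin _ hk
    intro hc2
    apply hki
    rw [← hc2]
    abel

lemma firstAfter_preimage {S : Finset (Fin n)} {i j c : Fin n}
    (h : FirstAfter (S.image (· + c)) i j) : FirstAfter S (i - c) (j - c) := by
  have := firstAfter_image (c := -c) h
  have himg : (S.image (· + c)).image (· + -c) = S := by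
    ext x
    rw [mem_image_addc]
    simp [mem_image_addc, sub_neg_eq_add]
  rw [himg] at this
  simpa [sub_eq_add_neg] using this

lemma matchStep_image {v : Word n} {M M' : Finset (Fin n × Fin n)} (c : Fin n)
    (h : MatchStep v M M') :
    MatchStep (rot c v) (M.image (pmap c)) (M'.image (pmap c)) := by
  cases h with
  | @step i j hi hw hj hj1 =>
    have himg : (insert (i, j) M).image (pmap c) =
        insert (i + c, j + c) (M.image (pmap c)) := by
      rw [Finset.image_insert]; rfl
    rw [himg]
    have hrot : ∀ x : Fin n, rot c v (x + c) = v x := fun x => by simp [rot]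
    refine MatchStep.step ?_ (by rw [hrot]; exact hw) ?_ (by rw [hrot]; exact hj1)
    · rw [matchedPos_image, mem_image_addc]
      simpa using hi
    · rw [matchedPos_image]
      exact firstAfter_image hj

lemma isMaximalMatching_image {v : Word n} {M : Finset (Fin n × Fin n)} (c : Fin n)
    (h : IsMaximalMatching v M) : IsMaximalMatching (rot c v) (M.image (pmap c)) := by
  constructor
  · have : ∀ M₂, Relation.ReflTransGen (MatchStep v) ∅ M₂ →
        Relation.ReflTransGen (MatchStep (rot c v)) ∅ (M₂.image (pmap c)) := by
      intro M₂ hch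
      induction hch with
      | refl => simp [Relation.ReflTransGen.refl]
      | tail hchain hstep ih => exact ih.tail (matchStep_image c hstep)
    exact this M h.1
  · intro M' hstep
    cases hstep with
    | @step i j hi hw hj hj1 =>
      apply h.2 (insert (i - c, j - c) M)
      have hrot : ∀ x : Fin n, rot c v x = v (x - c) := fun x => rfl
      refine MatchStep.step ?_ (by rw [← hrot]; exact hw) ?_ (by rw [← hrot]; exact hj1)
      · intro hc2
        apply hi
        rw [matchedPos_image, mem_image_addc]
        exact hc2
      · rw [matchedPos_image] at hj
        exact firstAfter_preimage hj

lemma unmatchedPos_rot (v : Word n) (c : Fin n) :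
    unmatchedPos (rot c v) = (unmatchedPos v).image (· + c) := by
  have h := isMaximalMatching_image c (matching_isMaximal v)
  have he := matching_eq h
  rw [unmatchedPos, he, matchedPos_image]
  ext x
  simp only [Finset.mem_sdiff, Finset.mem_univ, true_and, mem_image_addc, unmatchedPos]

/-! ### the KEY frame lemma -/

lemma key_lemma {w : Word n} (hL : IsLyndon w) (hmaj : zeros w < wt w) {s : ℕ}
    (hTne : (((unmatchedPos w).filter fun k => topc w k ≤ s)).Nonempty)
    {d : Fin n} (hd : d ≠ 0)
    (hLyn : IsLyndon (rot d (wT w s))) :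
    ((((unmatchedPos w).filter fun k => topc w k ≤ s)).min' hTne).val ≤ n - d.val := by
  by_contra hcon
  push_neg at hcon
  set F := ((unmatchedPos w).filter fun k => topc w k ≤ s) with hF
  set π := F.min' hTne with hπ
  set v := wT w s with hv
  set L := rot d v with hLdef
  have hn : 0 < n := Nat.pos_of_ne_zero (NeZero.ne n)
  have hdv : 1 ≤ d.val := by
    rcases Nat.eq_zero_or_pos d.val with h | h
    · exact absurd (Fin.ext h) hd
    · exact h
  have hπlt : π.val < n := π.isLt
  -- L ≤ v from Lyndon-ness
  have hLv : lexLE L v := by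
    have := hLyn (-d)
    rw [hLdef, rot_rot, add_neg_cancel, rot_zero] at this
    exact this
  -- facts about v versus w
  have hvw : ∀ x : Fin n, x.val < π.val → v x = w x := by
    intro x hx
    rw [hv, wT_apply, if_neg]
    rintro ⟨hxu, hxt⟩
    have : x ∈ F := Finset.mem_filter.mpr ⟨hxu, hxt⟩
    exact absurd (Finset.min'_le F x this) (not_le.mpr (by exact hx))
  have hπF : π ∈ F := Finset.min'_mem F hTne
  have hπU : π ∈ unmatchedPos w := (Finset.mem_filter.mp hπF).1
  have hwπ : w π = true := unmatched_true hmaj π hπU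
  have hvπ : v π = false := by
    rw [hv, wT_apply, if_pos ⟨hπU, (Finset.mem_filter.mp hπF).2⟩]
  -- τ = π + d
  set τ := π + d with hτ
  have hτval : τ.val = π.val + d.val - n := by
    have hdlt := d.isLt
    have h2 : n ≤ π.val + d.val := by omega
    rw [hτ, Fin.add_def]
    simp only [Fin.val_mk]
    rw [Nat.mod_eq_sub_mod h2, Nat.mod_eq_of_lt (by omega)]
  have hτπ : τ.val < π.val := by
    have h1 := d.isLt
    omega
  have hτpos : 1 ≤ τ.val := by omega
  have hτd : τ - d = π := by rw [hτ]; abel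
  -- index arithmetic for j < τ
  have hjd : ∀ j : Fin n, j.val < τ.val → (j - d).val = j.val + n - d.val ∧
      (j - d).val < π.val := by
    intro j hj
    have hjdval : j.val < d.val := by
      have := d.isLt
      omega
    have := val_sub_eq j d
    rw [if_neg (by omega)] at this
    omega
  -- L agrees with v below τ, via w
  have hLval : ∀ j : Fin n, j.val < τ.val → L j = w (j - d) := by
    intro j hj
    rw [hLdef]
    show v (j - d) = w (j - d)
    exact hvw _ (hjd j hj).2
  have hvval : ∀ j : Fin n, j.val < τ.val → v j = w j := by
    intro j hj
    exact hvw j (by omega)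
  -- main case analysis on the Lyndon property of w at rotation d
  have hwrot : lexLE w (rot d w) := hL d
  have habs : ∃ c₀ : Fin n, (∀ j : Fin n, j < c₀ → L j = v j) ∧ v c₀ = true ∧ L c₀ = false := by
    rcases hwrot with heq | ⟨i₀, hpre, hi₀1, hi₀0⟩
    · -- w is d-periodic
      refine ⟨τ, ?_, ?_, ?_⟩
      · intro j hj
        have hjτ : j.val < τ.val := hj
        rw [hLval j hjτ, hvval j hjτ]
        exact (congrFun heq j).symm
      · rw [hvw τ hτπ]
        have := congrFun heq τ
        rw [this]
        show rot d w τ = true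
        rw [rot, hτd]
        exact hwπ
      · rw [hLdef]
        show v (τ - d) = false
        rw [hτd]
        exact hvπ
    · -- first difference i₀ : w i₀ = 1, w (i₀ - d) = 0
      have hi₀0' : w (i₀ - d) = false := hi₀0
      rcases lt_trichotomy i₀.val τ.val with hlt | heq | hgt
      · -- difference before τ
        refine ⟨i₀, ?_, ?_, ?_⟩
        · intro j hj
          have hjτ : j.val < τ.val := by
            have : j.val < i₀.val := hj
            omega
          rw [hLval j hjτ, hvval j hjτ]
          exact (hpre j hj).symm
        · rw [hvval i₀ hlt]
          exact hi₀1
        · rw [hLval i₀ hlt]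
          exact hi₀0'
      · -- i₀ = τ : contradiction since w (τ - d) = w π = 1
        exfalso
        have : i₀ = τ := Fin.ext heq
        rw [this, hτd] at hi₀0'
        rw [hwπ] at hi₀0'
        simp at hi₀0'
      · -- difference after τ : τ works as in the periodic case
        refine ⟨τ, ?_, ?_, ?_⟩
        · intro j hj
          have hjτ : j.val < τ.val := hj
          rw [hLval j hjτ, hvval j hjτ]
          exact (hpre j (by
            show j.val < i₀.val
            omega)).symm
        · rw [hvw τ hτπ]
          have := hpre τ (by show τ.val < i₀.val; omega)
          rw [this]
          show rot d w τ = true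
          rw [rot, hτd]
          exact hwπ
        · rw [hLdef]
          show v (τ - d) = false
          rw [hτd]
          exact hvπ
  obtain ⟨c₀, hc₀pre, hc₀v, hc₀L⟩ := habs
  exact lexLE_absurd hLv c₀ hc₀pre hc₀v hc₀L

lemma max'_congr {α : Type*} [LinearOrder α] {A B : Finset α} (h : A = B) (hA : A.Nonempty) :
    A.max' hA = B.max' (h ▸ hA) := by subst h; rfl

lemma rot_update (d q : Fin n) (v : Word n) :
    Function.update (rot d v) (q + d) false = rot d (Function.update v q false) := by
  funext j
  rw [Function.update_apply]
  show _ = Function.update v q false (j - d)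
  rw [Function.update_apply]
  have hiff : j = q + d ↔ j - d = q := by
    constructor
    · rintro rfl; abel
    · rintro rfl; abel
  by_cases hc : j = q + d
  · rw [if_pos hc, if_pos (hiff.mp hc)]
  · rw [if_neg hc, if_neg (fun hc2 => hc (hiff.mpr hc2))]
    rfl

lemma topc_max'_midP {w : Word n} {s : ℕ} (hmidne : (midP w s).Nonempty)
    (hs : s ≤ (unmatchedPos w).card) :
    topc w ((midP w s).max' hmidne) = s + 1 := by
  set i := (midP w s).max' hmidne with hidef
  have himem : i ∈ midP w s := Finset.max'_mem _ _
  have hiu : i ∈ unmatchedPos w := (Finset.mem_filter.mp himem).1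
  have hgt : s < topc w i := (Finset.mem_filter.mp himem).2.2
  have hle : topc w i ≤ s + 1 := by
    have hsub : ((unmatchedPos w).filter fun k => i ≤ k) ⊆
        insert i ((unmatchedPos w).filter fun k => topc w k ≤ s) := by
      intro u hu
      rw [Finset.mem_filter] at hu
      rcases eq_or_lt_of_le hu.2 with he | hlt
      · exact Finset.mem_insert.mpr (Or.inl he.symm)
      · refine Finset.mem_insert.mpr (Or.inr (Finset.mem_filter.mpr ⟨hu.1, ?_⟩))
        by_contra hc
        push_neg at hc
        have humid : u ∈ midP w s := by
          rw [midP, Finset.mem_filter]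
          refine ⟨hu.1, ?_, hc⟩
          calc s < botc w i := (Finset.mem_filter.mp himem).2.1
            _ ≤ botc w u := botc_mono (le_of_lt hlt)
        exact absurd (Finset.le_max' _ u humid) (not_le.mpr hlt)
    calc topc w i ≤ (insert i ((unmatchedPos w).filter fun k => topc w k ≤ s)).card :=
          Finset.card_le_card hsub
      _ ≤ ((unmatchedPos w).filter fun k => topc w k ≤ s).card + 1 :=
          Finset.card_insert_le _ _
      _ = s + 1 := by rw [card_topc_le w hs]
  omega

end AuxProof

/-- The map `φ` proceeds from right to left through the initial Lyndon
word, successively turning the unmatched `1`s into `0`s: if `w` is a Lyndon word with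
strictly more `1`s than `0`s and `m` unmatched positions, then for every `1 ≤ t ≤ m`
such that `w_{t−1}` still has strictly more `1`s than `0`s,
`φ(necklace of w_{t−1}) = necklace of w_t`. -/
theorem phi_of_wT (n : ℕ) [NeZero n] (w : Word n)
    (hL : IsLyndon w) (hmaj : zeros w < wt w)
    (t : ℕ) (ht1 : 1 ≤ t) (ht2 : t ≤ (unmatchedPos w).card)
    (hupper : zeros (wT w (t - 1)) < wt (wT w (t - 1))) :
    phi (nec (wT w (t - 1))) = nec (wT w t) := by
  set s := t - 1 with hst
  have hts : t = s + 1 := by omega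
  have hm : (unmatchedPos w).card = wt w - zeros w := unmatchedPos_card hmaj
  have hsm : s ≤ (unmatchedPos w).card := by omega
  have hwtv := wt_wT hmaj hsm
  set v := wT w s with hv
  have hvmaj : zeros v < wt v := hupper
  have hmargin : 2 * s < (unmatchedPos w).card := by
    have h1 := hwtv.1
    have h2 := hwtv.2
    omega
  have hQ : unmatchedPos v = midP w s := unmatchedPos_wT hmaj (le_of_lt hmargin)
  have hQcard : (unmatchedPos v).card = wt v - zeros v := unmatchedPos_card hvmaj
  have hQne : (midP w s).Nonempty := by
    rw [← hQ]
    apply Finset.card_pos.mp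
    omega
  set qmax := (midP w s).max' hQne with hqmaxdef
  have hqmaxmem : qmax ∈ midP w s := Finset.max'_mem _ _
  have hqmaxU : qmax ∈ unmatchedPos w := (Finset.mem_filter.mp hqmaxmem).1
  have htopcqmax : topc w qmax = s + 1 := topc_max'_midP hQne hsm
  -- the final word equality
  have hfinal : Function.update v qmax false = wT w t := by
    funext j
    rw [Function.update_apply]
    by_cases hc : j = qmax
    · subst hc
      rw [if_pos rfl, wT_apply, if_pos ⟨hqmaxU, by omega⟩]
    · rw [if_neg hc]
      rw [hv, wT_apply, wT_apply]
      by_cases h1 : j ∈ unmatchedPos w ∧ topc w j ≤ s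
      · rw [if_pos h1, if_pos ⟨h1.1, by omega⟩]
      · rw [if_neg h1, if_neg]
        rintro ⟨hju, hjt⟩
        have : topc w j = s + 1 := by
          rcases Nat.lt_or_ge s (topc w j) with h | h
          · omega
          · exact absurd ⟨hju, h⟩ h1
        exact hc (topc_injOn hju hqmaxU (by omega))
  -- representative and Lyndon rotation
  have hrel : (rotSetoid n).r (Quotient.out (nec v)) v :=
    Quotient.exact (Quotient.out_eq (nec v))
  obtain ⟨e, he⟩ := hrel
  obtain ⟨i, hiL, hLyn⟩ := lyndonOf_spec (Quotient.out (nec v))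
  set L := lyndonOf (Quotient.out (nec v)) with hLdef
  have hout : rot (-e) v = Quotient.out (nec v) := by
    have h2 := congrArg (rot (-e)) he
    rw [rot_rot, add_neg_cancel, rot_zero] at h2
    exact h2.symm
  set d := -e + i with hddef
  have hLd : rot d v = L := by
    rw [hddef, ← rot_rot, hout, hiL]
  have hULne : (unmatchedPos L).Nonempty := by
    rw [← hLd, unmatchedPos_rot, hQ]
    exact hQne.image _
  have hUL : unmatchedPos L = (midP w s).image (· + d) := by
    rw [← hLd, unmatchedPos_rot, hQ]
  -- key claim : flipTop L is a rotation of update v qmax false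
  have hmain : nec (flipTop L) = nec (Function.update v qmax false) := by
    have hLv_or : L = v ∨ ((midP w s).image (· + d)).max' (hUL ▸ hULne) = qmax + d := by
      by_cases hd0 : d = 0
      · left
        rw [← hLd, hd0, rot_zero]
      · by_cases hs0 : s = 0
        · -- v = w is Lyndon, so L = v
          left
          have hvw : v = w := by rw [hv, hs0, wT_zero]
          have hvLyndon : IsLyndon v := hvw ▸ hL
          exact (lyndon_unique hvLyndon hLyn d hLd).symm
        · right
          -- use the key lemma
          have hTne : (((unmatchedPos w).filter fun k => topc w k ≤ s)).Nonempty := by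
            apply Finset.card_pos.mp
            rw [card_topc_le w hsm]
            omega
          have hπle := key_lemma hL hmaj hTne hd0 (by rw [← hv, hLd]; exact hLyn)
          set π := (((unmatchedPos w).filter fun k => topc w k ≤ s)).min' hTne with hπdef
          have hπmem := Finset.min'_mem _ hTne
          have hπtop : topc w π ≤ s := (Finset.mem_filter.mp hπmem).2
          have hqlt : ∀ q ∈ midP w s, q.val < π.val := by
            intro q hq
            have hqt : s < topc w q := (Finset.mem_filter.mp hq).2.2
            by_contra hcon
            push_neg at hcon
            have : topc w q ≤ topc w π := topc_anti (by exact hcon)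
            omega
          have haddval : ∀ q ∈ midP w s, (q + d).val = q.val + d.val := by
            intro q hq
            rw [Fin.add_def]
            apply Nat.mod_eq_of_lt
            have h1 := hqlt q hq
            have h2 := d.isLt
            omega
          apply le_antisymm
          · apply Finset.max'_le
            intro y hy
            obtain ⟨q, hq, rfl⟩ := Finset.mem_image.mp hy
            show (q + d).val ≤ (qmax + d).val
            rw [haddval q hq, haddval qmax hqmaxmem]
            have : q ≤ qmax := Finset.le_max' _ q hq
            have : q.val ≤ qmax.val := this
            omega
          · exact Finset.le_max' _ (qmax + d) (Finset.mem_image_of_mem (· + d) hqmaxmem)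
    rcases hLv_or with hLv | hmax'
    · -- L = v as words
      rw [hLv, flipTop, dif_pos (hLv ▸ hULne)]
      have : (unmatchedPos v).max' (hLv ▸ hULne) = qmax := by
        rw [max'_congr hQ]
      rw [this]
    · -- L = rot d v and the top unmatched position corresponds
      rw [flipTop, dif_pos hULne]
      have hm' : (unmatchedPos L).max' hULne = qmax + d := by
        rw [max'_congr hUL]
        exact hmax'
      rw [hm', ← hLd, rot_update]
      have hrel2 : (rotSetoid n).r (Function.update v qmax false)
          (rot d (Function.update v qmax false)) := ⟨d, rfl⟩
      exact (Quotient.sound hrel2).symm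
  calc phi (nec v) = nec (flipTop L) := rfl
    _ = nec (Function.update v qmax false) := hmain
    _ = nec (wT w t) := by rw [hfinal]
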